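/- The standard normal hazard rate H satisfies H(x) ≥ x for all x ∈ ℝ, and H is monotonically increasing on ℝ (i.e., x ≤ y implies H(x) ≤ H(y)). -/

import Mathlib

open MeasureTheory ProbabilityTheory Real

/-- Standard normal density. -/
noncomputable def stdPdf (x : ℝ) : ℝ := (Real.sqrt (2 * Real.pi))⁻¹ * Real.exp (-(x ^ 2) / 2)

/-- Standard normal CDF. -/
noncomputable def stdCdf (x : ℝ) : ℝ := ∫ u in Set.Iic x, stdPdf u

/-- Standard normal complementary CDF. -/
noncomputable def stdCcdf (x : ℝ) : ℝ := 1 - stdCdf x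

/-- Standard normal hazard rate. -/
noncomputable def hazard (x : ℝ) : ℝ := stdPdf x / stdCcdf x

lemma stdPdf_eq (x : ℝ) : stdPdf x = (Real.sqrt (2 * Real.pi))⁻¹ * Real.exp (-(1/2) * x ^ 2) := by
  unfold stdPdf; ring_nf

lemma stdPdf_pos (x : ℝ) : 0 < stdPdf x := by
  unfold stdPdf
  have : 0 < Real.sqrt (2 * Real.pi) := Real.sqrt_pos.2 (by positivity)
  positivity

lemma integrable_stdPdf : Integrable stdPdf := by
  have h : Integrable (fun x : ℝ => Real.exp (-(1/2 : ℝ) * x ^ 2)) :=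
    integrable_exp_neg_mul_sq (by norm_num)
  have := h.const_mul (Real.sqrt (2 * Real.pi))⁻¹
  refine this.congr (Filter.Eventually.of_forall fun x => ?_)
  rw [stdPdf_eq]

lemma integral_stdPdf : ∫ x, stdPdf x = 1 := by
  have h : ∫ x : ℝ, Real.exp (-(1/2 : ℝ) * x ^ 2) = Real.sqrt (Real.pi / (1/2)) :=
    integral_gaussian (1/2)
  have hs : Real.pi / (1/2 : ℝ) = 2 * Real.pi := by ring
  calc ∫ x, stdPdf x = ∫ x, (Real.sqrt (2 * Real.pi))⁻¹ * Real.exp (-(1/2 : ℝ) * x ^ 2) := by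
        simp_rw [stdPdf_eq]
    _ = (Real.sqrt (2 * Real.pi))⁻¹ * ∫ x, Real.exp (-(1/2 : ℝ) * x ^ 2) := by
        rw [MeasureTheory.integral_const_mul]
    _ = 1 := by
        rw [h, hs, inv_mul_cancel₀]
        exact ne_of_gt (Real.sqrt_pos.2 (by positivity))

lemma stdCcdf_eq (x : ℝ) : stdCcdf x = ∫ u in Set.Ioi x, stdPdf u := by
  have := intervalIntegral.integral_Iic_add_Ioi (μ := volume) (b := x)
    integrable_stdPdf.integrableOn integrable_stdPdf.integrableOn
  unfold stdCcdf stdCdf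
  rw [← integral_stdPdf]
  linarith [this]

lemma stdCcdf_pos (x : ℝ) : 0 < stdCcdf x := by
  rw [stdCcdf_eq]
  refine (setIntegral_pos_iff_support_of_nonneg_ae ?_ ?_).2 ?_
  · exact Filter.Eventually.of_forall fun u => (stdPdf_pos u).le
  · exact integrable_stdPdf.integrableOn
  · have : Function.support stdPdf = Set.univ := by
      ext u; simp [Function.mem_support, (stdPdf_pos u).ne']
    rw [this, Set.univ_inter]
    simp [Real.volume_Ioi]

lemma hasDerivAt_stdPdf (x : ℝ) : HasDerivAt stdPdf (-x * stdPdf x) x := by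
  have h1 : HasDerivAt (fun y : ℝ => -(y ^ 2) / 2) (-x) x := by
    have := ((hasDerivAt_pow 2 x).neg).div_const 2
    exact this.congr_deriv (by norm_num; ring)
  have h2 := (h1.exp).const_mul (Real.sqrt (2 * Real.pi))⁻¹
  have : stdPdf = fun y => (Real.sqrt (2 * Real.pi))⁻¹ * Real.exp (-(y ^ 2) / 2) := rfl
  rw [this]
  exact h2.congr_deriv (by dsimp only; ring)

lemma continuous_stdPdf : Continuous stdPdf := by
  unfold stdPdf
  continuity

lemma tendsto_stdPdf_atTop : Filter.Tendsto stdPdf Filter.atTop (nhds 0) := by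
  have h : Filter.Tendsto (fun x : ℝ => Real.exp (-(1/2 : ℝ) * x ^ 2)) Filter.atTop (nhds 0) := by
    have h1 : Filter.Tendsto (fun x : ℝ => -(1/2 : ℝ) * x ^ 2) Filter.atTop Filter.atBot := by
      apply Filter.Tendsto.const_mul_atTop_of_neg (by norm_num)
      exact Filter.tendsto_pow_atTop (by norm_num : (2:ℕ) ≠ 0)
    exact Real.tendsto_exp_atBot.comp h1
  have := h.const_mul (Real.sqrt (2 * Real.pi))⁻¹
  rw [mul_zero] at this
  refine this.congr fun x => ?_
  rw [stdPdf_eq]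

/-- Mills-type inequality: `x Φᶜ(x) ≤ φ(x)`. -/
lemma mills (x : ℝ) : x * stdCcdf x ≤ stdPdf x := by
  rcases le_or_gt x 0 with hx | hx
  · nlinarith [stdPdf_pos x, stdCcdf_pos x]
  · -- key : ∫_{Ioi x} u φ(u) du = φ(x), with g = -φ
    have hderiv : ∀ u ∈ Set.Ioi x, HasDerivAt (fun y => -stdPdf y) (u * stdPdf u) u := by
      intro u hu
      have := (hasDerivAt_stdPdf u).neg
      exact this.congr_deriv (by ring)
    have hpos : ∀ u ∈ Set.Ioi x, 0 ≤ u * stdPdf u := fun u hu =>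
      mul_nonneg (le_of_lt (lt_trans hx hu)) (stdPdf_pos u).le
    have htend : Filter.Tendsto (fun y => -stdPdf y) Filter.atTop (nhds 0) := by
      simpa using tendsto_stdPdf_atTop.neg
    have hcont : ContinuousWithinAt (fun y => -stdPdf y) (Set.Ici x) x :=
      (continuous_stdPdf.neg).continuousWithinAt
    have key : ∫ u in Set.Ioi x, u * stdPdf u = stdPdf x := by
      have := integral_Ioi_of_hasDerivAt_of_nonneg hcont hderiv hpos htend
      simpa using this
    have hint : IntegrableOn (fun u => u * stdPdf u) (Set.Ioi x) :=
      integrableOn_Ioi_deriv_of_nonneg hcont hderiv hpos htend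
    have mono : ∫ u in Set.Ioi x, stdPdf u ≤ ∫ u in Set.Ioi x, x⁻¹ * (u * stdPdf u) := by
      refine setIntegral_mono_on integrable_stdPdf.integrableOn (hint.const_mul x⁻¹)
        measurableSet_Ioi fun u hu => ?_
      have hu' : x ≤ u := le_of_lt hu
      have : 1 ≤ x⁻¹ * u := by
        rw [← div_eq_inv_mul]; exact (one_le_div hx).2 hu'
      nlinarith [stdPdf_pos u]
    rw [MeasureTheory.integral_const_mul, key] at mono
    rw [stdCcdf_eq]
    calc x * ∫ u in Set.Ioi x, stdPdf u ≤ x * (x⁻¹ * stdPdf x) :=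
          mul_le_mul_of_nonneg_left mono hx.le
      _ = stdPdf x := by field_simp

lemma hasDerivAt_stdCcdf (x : ℝ) : HasDerivAt stdCcdf (-stdPdf x) x := by
  have hcdf : ∀ y : ℝ, stdCdf y = stdCdf 0 + ∫ u in (0:ℝ)..y, stdPdf u := by
    intro y
    have := intervalIntegral.integral_Iic_sub_Iic (μ := volume) (f := stdPdf)
      integrable_stdPdf.integrableOn integrable_stdPdf.integrableOn (a := 0) (b := y)
    unfold stdCdf; linarith
  have h1 : HasDerivAt (fun y => ∫ u in (0:ℝ)..y, stdPdf u) (stdPdf x) x := by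
    refine intervalIntegral.integral_hasDerivAt_right
      integrable_stdPdf.intervalIntegrable ?_ continuous_stdPdf.continuousAt
    exact continuous_stdPdf.stronglyMeasurable.stronglyMeasurableAtFilter
  have h2 : HasDerivAt stdCdf (stdPdf x) x := by
    have := (h1.const_add (stdCdf 0))
    refine this.congr_of_eventuallyEq (Filter.Eventually.of_forall fun y => (hcdf y))
  have h3 := (h2.const_sub 1)
  exact h3

lemma hasDerivAt_hazard (x : ℝ) :
    HasDerivAt hazard
      (stdPdf x * (stdPdf x - x * stdCcdf x) / (stdCcdf x) ^ 2) x := by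
  have h := (hasDerivAt_stdPdf x).div (hasDerivAt_stdCcdf x) (stdCcdf_pos x).ne'
  have : hazard = fun y => stdPdf y / stdCcdf y := rfl
  rw [this]
  exact h.congr_deriv (by ring)

/-- The standard normal hazard rate `H(x) = φ(x)/Φᶜ(x)` satisfies `H(x) ≥ x` for all `x`,
and `H` is monotonically increasing on `ℝ`. -/
theorem hazard_ge_self_and_monotone :
    (∀ x : ℝ, x ≤ hazard x) ∧ Monotone hazard := by
  constructor
  · intro x
    rw [hazard, le_div_iff₀ (stdCcdf_pos x)]
    exact mills x
  · apply monotone_of_deriv_nonneg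
    · exact fun x => (hasDerivAt_hazard x).differentiableAt
    · intro x
      rw [(hasDerivAt_hazard x).deriv]
      have h1 := stdPdf_pos x
      have h2 := mills x
      have h3 := stdCcdf_pos x
      apply div_nonneg _ (sq_nonneg _)
      nlinarith
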